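/- Main Theorem: For every natural number n ≥ 2 and every real number x ≥ 1, the sequence of truncated nth-root nested radicals R m x converges to x + 1 as m → ∞; that is, x + 1 = (∑_{k=0}^{n-2} C(n,k) x^k + x^{n-1}(∑_{k=0}^{n-2} C(n,k)(x+n-1)^k + (x+n-1)^{n-1}(...)^{1/n})^{1/n})^{1/n}. -/

import Mathlib

noncomputable def R (n : ℕ) : ℕ → ℝ → ℝ
  | 0, _ => 0
  | m + 1, y =>
      (∑ k ∈ Finset.range (n - 1), (n.choose k : ℝ) * y ^ k
        + y ^ (n - 1) * R n m (y + n - 1)) ^ (1 / n : ℝ)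

lemma R_succ_def (n : ℕ) (m : ℕ) (y : ℝ) :
    R n (m+1) y = (∑ k ∈ Finset.range (n - 1), (n.choose k : ℝ) * y ^ k
        + y ^ (n - 1) * R n m (y + n - 1)) ^ (1 / n : ℝ) := rfl

lemma key_identity (p : ℕ) (y : ℝ) :
    ∑ k ∈ Finset.range (p + 1), (((p+2).choose k : ℕ) : ℝ) * y ^ k
      + y ^ (p + 1) * (y + (p + 2)) = (y + 1) ^ (p + 2) := by
  conv_rhs => rw [add_pow, Finset.sum_range_succ, Finset.sum_range_succ]
  simp only [one_pow, mul_one, Nat.choose_self, Nat.cast_one, Nat.choose_succ_self_right]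
  have : ∀ k ∈ Finset.range (p+1), (y ^ k * (((p+2).choose k : ℕ) : ℝ))
      = (((p+2).choose k : ℕ) : ℝ) * y ^ k := by
    intro k _; ring
  rw [Finset.sum_congr rfl this]
  push_cast
  ring

lemma S_nonneg (p : ℕ) (y : ℝ) (hy : 0 ≤ y) :
    0 ≤ ∑ k ∈ Finset.range (p + 1), (((p+2).choose k : ℕ) : ℝ) * y ^ k :=
  Finset.sum_nonneg fun k _ => mul_nonneg (Nat.cast_nonneg _) (pow_nonneg hy _)

lemma S_ge_one (p : ℕ) (y : ℝ) (hy : 0 ≤ y) :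
    (1:ℝ) ≤ ∑ k ∈ Finset.range (p + 1), (((p+2).choose k : ℕ) : ℝ) * y ^ k := by
  have h0 : (0:ℕ) ∈ Finset.range (p+1) := by simp
  have := Finset.single_le_sum (f := fun k => (((p+2).choose k : ℕ) : ℝ) * y ^ k)
    (fun k _ => mul_nonneg (Nat.cast_nonneg _) (pow_nonneg hy _)) h0
  simpa using this

lemma R_nonneg (p : ℕ) : ∀ m (y : ℝ), 1 ≤ y → 0 ≤ R (p+2) m y := by
  intro m
  induction m with
  | zero => intro y _; simp [R]
  | succ m ih =>
    intro y hy
    have hy0 : (0:ℝ) ≤ y := le_trans zero_le_one hy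
    have hz : (1:ℝ) ≤ y + (p+2 : ℕ) - 1 := by push_cast; linarith
    rw [R_succ_def]
    apply Real.rpow_nonneg
    have := ih _ hz
    have : 0 ≤ y ^ ((p+2) - 1) * R (p+2) m (y + (p+2:ℕ) - 1) :=
      mul_nonneg (pow_nonneg hy0 _) this
    have hS := S_nonneg p y hy0
    simp only [show (p+2) - 1 = p + 1 from rfl] at *
    linarith

lemma R_le (p : ℕ) : ∀ m (y : ℝ), 1 ≤ y → R (p+2) m y ≤ y + 1 := by
  intro m
  induction m with
  | zero => intro y hy; simp [R]; linarith
  | succ m ih =>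
    intro y hy
    have hy0 : (0:ℝ) ≤ y := le_trans zero_le_one hy
    have hz : (1:ℝ) ≤ y + (p+2 : ℕ) - 1 := by push_cast; linarith
    rw [R_succ_def]
    have harg : ∑ k ∈ Finset.range ((p+2) - 1), (((p+2).choose k : ℕ) : ℝ) * y ^ k
        + y ^ ((p+2) - 1) * R (p+2) m (y + (p+2:ℕ) - 1) ≤ (y+1)^(p+2) := by
      rw [← key_identity p y]
      simp only [show (p+2) - 1 = p + 1 from rfl]
      have h1 : R (p+2) m (y + (p+2:ℕ) - 1) ≤ (y + (p+2:ℕ) - 1) + 1 := ih _ hz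
      have h2 : (y + (p+2:ℕ) - 1) + 1 = y + (p+2:ℕ) := by ring
      have h3 : R (p+2) m (y + (p+2:ℕ) - 1) ≤ y + ((p:ℝ) + 2) := by
        rw [h2] at h1; push_cast at h1 ⊢; linarith
      have := mul_le_mul_of_nonneg_left h3 (pow_nonneg hy0 (p+1))
      linarith
    calc (∑ k ∈ Finset.range ((p+2) - 1), (((p+2).choose k : ℕ) : ℝ) * y ^ k
        + y ^ ((p+2) - 1) * R (p+2) m (y + (p+2:ℕ) - 1)) ^ (1 / ((p+2:ℕ):ℝ) : ℝ)
        ≤ ((y+1)^(p+2) : ℝ) ^ (1 / ((p+2:ℕ):ℝ) : ℝ) := by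
          apply Real.rpow_le_rpow _ harg (by positivity)
          simp only [show (p+2) - 1 = p + 1 from rfl]
          have := R_nonneg p m _ hz
          have hS := S_nonneg p y hy0
          have : 0 ≤ y ^ (p+1) * R (p+2) m (y + (p+2:ℕ) - 1) :=
            mul_nonneg (pow_nonneg hy0 _) this
          linarith
      _ = y + 1 := by
          rw [← Real.rpow_natCast (y+1) (p+2), ← Real.rpow_mul (by linarith)]
          rw [show ((p+2 : ℕ) : ℝ) * (1 / ((p+2:ℕ):ℝ)) = 1 by field_simp]
          exact Real.rpow_one _

lemma R_ge (p : ℕ) : ∀ m (y : ℝ), 1 ≤ y →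
    (y+1) * (((((p+2:ℕ):ℝ))^2 * (y+1)) ^ (-((3 / (2*((p+2:ℕ):ℝ))) ^ m))) ≤ R (p+2) (m+1) y := by
  have hn2 : (2:ℝ) ≤ ((p+2:ℕ):ℝ) := by push_cast; linarith
  have hn0 : (0:ℝ) < ((p+2:ℕ):ℝ) := by linarith
  set nn : ℝ := ((p+2:ℕ):ℝ) with hnn
  intro m
  induction m with
  | zero =>
    intro y hy
    have hy0 : (0:ℝ) ≤ y := by linarith
    have hc : (1:ℝ) ≤ nn^2 * (y+1) := by nlinarith
    have hc0 : (0:ℝ) < nn^2 * (y+1) := by nlinarith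
    have hL : (y+1) * ((nn^2 * (y+1)) ^ (-((3 / (2*nn)) ^ 0))) ≤ 1 := by
      rw [pow_zero, Real.rpow_neg_one]
      rw [show nn^2 * (y+1) = (y+1) * nn^2 by ring, mul_inv]
      rw [show (y+1) * ((y+1)⁻¹ * (nn^2)⁻¹) = ((y+1) * (y+1)⁻¹) * (nn^2)⁻¹ by ring]
      rw [mul_inv_cancel₀ (by linarith)]
      rw [one_mul]
      rw [inv_le_one_iff₀]
      right; nlinarith
    refine le_trans hL ?_
    rw [R_succ_def]
    have hR0 : R (p+2) 0 (y + nn - 1) = 0 := rfl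
    rw [hR0, mul_zero, add_zero]
    calc (1:ℝ) = (1:ℝ) ^ (1/nn : ℝ) := (Real.one_rpow _).symm
      _ ≤ (∑ k ∈ Finset.range ((p+2) - 1), (((p+2).choose k : ℕ) : ℝ) * y ^ k) ^ (1/nn : ℝ) := by
          apply Real.rpow_le_rpow zero_le_one _ (by positivity)
          simpa [show (p+2)-1 = p+1 from rfl] using S_ge_one p y hy0
  | succ m ih =>
    intro y hy
    have hy0 : (0:ℝ) ≤ y := by linarith
    set z : ℝ := y + nn - 1 with hzdef
    have hz : (1:ℝ) ≤ z := by simp only [hzdef]; linarith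
    have hz1 : z + 1 = y + nn := by simp only [hzdef]; ring
    have e : ℝ := 0
    set r : ℝ := 3 / (2*nn) with hr
    set ee : ℝ := r ^ m with hee
    have hee0 : 0 ≤ ee := by positivity
    set cy : ℝ := nn^2 * (y+1) with hcy
    set cz : ℝ := nn^2 * (z+1) with hcz
    have hcy1 : (1:ℝ) ≤ cy := by nlinarith
    have hcy0 : (0:ℝ) < cy := by nlinarith
    have hcz1 : (1:ℝ) ≤ cz := by nlinarith
    have hcz0 : (0:ℝ) < cz := by nlinarith
    -- IH at z
    have hIH := ih z hz
    -- factor ≤ 1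
    have hf1 : cz ^ (-ee) ≤ 1 :=
      Real.rpow_le_one_of_one_le_of_nonpos hcz1 (neg_nonpos.mpr hee0)
    have hf0 : 0 ≤ cz ^ (-ee) := Real.rpow_nonneg (le_of_lt hcz0) _
    set S : ℝ := ∑ k ∈ Finset.range (p+1), (((p+2).choose k : ℕ) : ℝ) * y ^ k with hS
    have hSnn : 0 ≤ S := S_nonneg p y hy0
    -- argument lower bound
    have harg : cz ^ (-ee) * (y+1)^(p+2) ≤ S + y ^ (p+1) * R (p+2) (m+1) z := by
      have t1 : S * (cz ^ (-ee)) ≤ S := by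
        calc S * (cz ^ (-ee)) ≤ S * 1 := by
              exact mul_le_mul_of_nonneg_left hf1 hSnn
          _ = S := mul_one S
      have t2 : y ^ (p+1) * ((z+1) * cz ^ (-ee)) ≤ y ^ (p+1) * R (p+2) (m+1) z :=
        mul_le_mul_of_nonneg_left hIH (pow_nonneg hy0 _)
      have key := key_identity p y
      have hz2 : z + 1 = y + ((p:ℝ) + 2) := by rw [hz1]; simp only [hnn]; push_cast; ring
      have expand : cz ^ (-ee) * (y+1)^(p+2) = S * (cz ^ (-ee)) + y^(p+1) * ((z+1) * cz ^ (-ee)) := by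
        rw [← key, hz2]; ring
      rw [expand]
      have := add_le_add t1 t2
      linarith
    -- base comparison cz ≤ cy^(3/2)
    have hbase : cz ≤ cy ^ ((3:ℝ)/2) := by
      have h1 : cz ≤ nn^3 * (y+1) := by
        rw [hcz, hz1]
        nlinarith [mul_nonneg (mul_nonneg (le_of_lt hn0) (le_of_lt hn0))
          (mul_nonneg (by linarith : (0:ℝ) ≤ nn - 1) hy0)]
      have h2 : nn^3 * (y+1) ≤ cy ^ ((3:ℝ)/2) := by
        have hsplit : cy ^ ((3:ℝ)/2) = cy * cy ^ ((1:ℝ)/2) := by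
          rw [show (3:ℝ)/2 = 1 + 1/2 by norm_num, Real.rpow_add hcy0, Real.rpow_one]
        have hsq : ((nn^2 : ℝ)) ^ ((1:ℝ)/2) = nn := by
          rw [← Real.rpow_natCast nn 2, ← Real.rpow_mul (le_of_lt hn0)]
          norm_num
        have hmono : nn ≤ cy ^ ((1:ℝ)/2) := by
          rw [← hsq]
          apply Real.rpow_le_rpow (by positivity) (by rw [hcy]; nlinarith) (by norm_num)
        have : cy * nn ≤ cy * cy ^ ((1:ℝ)/2) :=
          mul_le_mul_of_nonneg_left hmono (le_of_lt hcy0)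
        have hcyn : cy * nn = nn^3 * (y+1) := by rw [hcy]; ring
        linarith [hsplit ▸ this, hcyn ▸ this]
      linarith
    -- pass to cy bound on the rpow factor
    have hf2 : cy ^ (-((3:ℝ)/2 * ee)) ≤ cz ^ (-ee) := by
      have := Real.rpow_le_rpow_of_nonpos hcz0 hbase (neg_nonpos.mpr hee0)
      rwa [← Real.rpow_mul (le_of_lt hcy0), show (3:ℝ)/2 * -ee = -((3:ℝ)/2 * ee) by ring] at this
    have harg2 : cy ^ (-((3:ℝ)/2 * ee)) * (y+1)^(p+2) ≤ S + y ^ (p+1) * R (p+2) (m+1) z := by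
      have : cy ^ (-((3:ℝ)/2 * ee)) * (y+1)^(p+2) ≤ cz ^ (-ee) * (y+1)^(p+2) :=
        mul_le_mul_of_nonneg_right hf2 (by positivity)
      linarith
    -- take nth roots
    rw [R_succ_def]
    have hroot : (cy ^ (-((3:ℝ)/2 * ee)) * (y+1)^(p+2)) ^ (1/nn : ℝ)
        ≤ (S + y ^ (p+1) * R (p+2) (m+1) z) ^ (1/nn : ℝ) := by
      apply Real.rpow_le_rpow (by positivity) harg2 (by positivity)
    have hleft : (cy ^ (-((3:ℝ)/2 * ee)) * (y+1)^(p+2)) ^ (1/nn : ℝ)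
        = (y+1) * cy ^ (-(r ^ (m+1))) := by
      rw [Real.mul_rpow (Real.rpow_nonneg (le_of_lt hcy0) _) (by positivity)]
      rw [← Real.rpow_mul (le_of_lt hcy0)]
      rw [← Real.rpow_natCast (y+1) (p+2), ← Real.rpow_mul (by linarith)]
      have h3 : ((p+2:ℕ) : ℝ) * (1/nn : ℝ) = 1 := by
        rw [hnn]; field_simp
      have h4 : (-((3:ℝ)/2 * ee)) * (1/nn : ℝ) = -(r ^ (m+1)) := by
        rw [hee, hr, pow_succ]
        field_simp
      rw [h3, h4, Real.rpow_one]
      ring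
    have hgoal : (y+1) * cy ^ (-(r ^ (m+1)))
        ≤ (S + y ^ (p+1) * R (p+2) (m+1) z) ^ (1/nn : ℝ) := by
      rw [← hleft]; exact hroot
    exact hgoal

theorem nested_nth_root_radical_eq (n : ℕ) (hn : 2 ≤ n) (x : ℝ) (hx : 1 ≤ x) :
    Filter.Tendsto (fun m => R n m x) Filter.atTop (nhds (x + 1)) := by
  obtain ⟨p, rfl⟩ : ∃ p, n = p + 2 := ⟨n - 2, by omega⟩
  have hn2 : (2:ℝ) ≤ ((p+2:ℕ):ℝ) := by push_cast; linarith
  set nn : ℝ := ((p+2:ℕ):ℝ) with hnn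
  set r : ℝ := 3 / (2*nn) with hr
  set c : ℝ := nn^2 * (x+1) with hc
  have hc0 : (0:ℝ) < c := by nlinarith
  have hr0 : (0:ℝ) ≤ r := by positivity
  have hr1 : r < 1 := by
    rw [hr, div_lt_one (by linarith)]
    linarith
  have h0 : Filter.Tendsto (fun m : ℕ => -(r^m)) Filter.atTop (nhds 0) := by
    simpa using (tendsto_pow_atTop_nhds_zero_of_lt_one hr0 hr1).neg
  have h1 : Filter.Tendsto (fun m : ℕ => c ^ (-(r^m))) Filter.atTop (nhds 1) := by
    have := (Real.continuousAt_const_rpow (ne_of_gt hc0)).tendsto.comp h0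
    simpa [Real.rpow_zero, Function.comp_def] using this
  have hg : Filter.Tendsto (fun m : ℕ => (x+1) * (c ^ (-(r^m)))) Filter.atTop (nhds (x+1)) := by
    simpa using h1.const_mul (x+1)
  rw [← Filter.tendsto_add_atTop_iff_nat 1]
  exact tendsto_of_tendsto_of_tendsto_of_le_of_le hg tendsto_const_nhds
    (fun m => R_ge p m x hx) (fun m => R_le p (m+1) x hx)
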